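/- If one local function is replaced, the two constrained minimizers x⁽¹⁾ and x⁽²⁾ satisfy ‖x⁽²⁾ − x⁽¹⁾‖² ≤ 4nκ(1 + 1/√κ + |b|/n)². -/

import Mathlib

open Set Finset

/-- Tangent line inequality for a differentiable convex function on ℝ. -/
lemma tangent_le_of_convex {f : ℝ → ℝ} (hc : ConvexOn ℝ Set.univ f)
    (hd : ∀ x, DifferentiableAt ℝ f x) (m y : ℝ) :
    f m + deriv f m * (y - m) ≤ f y := by
  rcases lt_trichotomy m y with h | rfl | h
  · have hs := hc.deriv_le_slope (Set.mem_univ m) (Set.mem_univ y) h (hd m)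
    rw [slope_def_field] at hs
    have hpos : (0:ℝ) < y - m := by linarith
    have := (le_div_iff₀ hpos).mp hs
    nlinarith
  · simp
  · have hs := hc.slope_le_deriv (Set.mem_univ y) (Set.mem_univ m) h (hd m)
    rw [slope_def_field] at hs
    have hpos : (0:ℝ) < m - y := by linarith
    have := (div_le_iff₀ hpos).mp hs
    nlinarith

/-- Strong convexity lower bound: if `g - α/2 x²` is convex, `g` is differentiable with
global min at `m` and `g m = 0`, then `g y ≥ α/2 (y-m)²`. -/
lemma strong_lower {g : ℝ → ℝ} {α m : ℝ}
    (hd : ∀ x, DifferentiableAt ℝ g x)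
    (hc : ConvexOn ℝ Set.univ (fun x => g x - α / 2 * x ^ 2))
    (hm : ∀ y, g m ≤ g y) (hm0 : g m = 0) (y : ℝ) :
    α / 2 * (y - m) ^ 2 ≤ g y := by
  have hdg0 : deriv g m = 0 := by
    have : IsLocalMin g m := Filter.Eventually.of_forall hm
    exact this.deriv_eq_zero
  set h : ℝ → ℝ := fun x => g x - α / 2 * x ^ 2 with hh
  have hdh : ∀ x, HasDerivAt h (deriv g x - α / 2 * (2 * x)) x := by
    intro x
    have h1 : HasDerivAt (fun t : ℝ => α / 2 * t ^ 2) (α / 2 * (2 * x)) x := by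
      have := (hasDerivAt_pow 2 x).const_mul (α / 2)
      simpa using this
    exact (hd x).hasDerivAt.sub h1
  have hdall : ∀ x, DifferentiableAt ℝ h x := fun x => (hdh x).differentiableAt
  have htan := tangent_le_of_convex hc hdall m y
  rw [(hdh m).deriv] at htan
  simp only [hh] at htan
  rw [hdg0, hm0] at htan
  nlinarith [htan]

/-- Smoothness upper bound: if `g` is differentiable with `β`-Lipschitz derivative, has a
global min at `m` with `g m = 0`, then `g y ≤ β/2 (y-m)²`. -/
lemma smooth_upper {g : ℝ → ℝ} {β m : ℝ} (hβ : 0 < β)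
    (hd : ∀ x, DifferentiableAt ℝ g x)
    (hs : ∀ x y, |deriv g x - deriv g y| ≤ β * |x - y|)
    (hm : ∀ y, g m ≤ g y) (hm0 : g m = 0) (y : ℝ) :
    g y ≤ β / 2 * (y - m) ^ 2 := by
  have hdg0 : deriv g m = 0 := by
    have : IsLocalMin g m := Filter.Eventually.of_forall hm
    exact this.deriv_eq_zero
  set q : ℝ → ℝ := fun x => β / 2 * x ^ 2 - g x with hq
  have hdq : ∀ x, HasDerivAt q (β * x - deriv g x) x := by
    intro x
    have h1 : HasDerivAt (fun t : ℝ => β / 2 * t ^ 2) (β * x) x := by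
      have := (hasDerivAt_pow 2 x).const_mul (β / 2)
      refine this.congr_deriv ?_
      push_cast; ring
    exact h1.sub (hd x).hasDerivAt
  have hqdiff : Differentiable ℝ q := fun x => (hdq x).differentiableAt
  have hderiv_eq : deriv q = fun x => β * x - deriv g x := funext fun x => (hdq x).deriv
  have hmono : Monotone (deriv q) := by
    rw [hderiv_eq]
    intro a c hac
    have h1 := hs c a
    have h2 : |c - a| = c - a := abs_of_nonneg (by linarith)
    rw [h2] at h1
    have := abs_le.mp h1
    simp only
    linarith [this.2]
  have hconv : ConvexOn ℝ Set.univ q := hmono.convexOn_univ_of_deriv hqdiff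
  have htan := tangent_le_of_convex hconv (fun x => hqdiff x) m y
  rw [(hdq m).deriv] at htan
  simp only [hq] at htan
  rw [hdg0, hm0] at htan
  nlinarith [htan]


lemma euclid_bound {n : ℕ} (x₁ x₂ m₁ m₂ : Fin n → ℝ) (D E : ℝ) (hD : 0 ≤ D) (hE : 0 ≤ E)
    (h1 : ∑ i, (x₁ i - m₁ i) ^ 2 ≤ D ^ 2) (h2 : ∑ i, (x₂ i - m₂ i) ^ 2 ≤ D ^ 2)
    (h3 : ∑ i, (m₁ i) ^ 2 ≤ E ^ 2) (h4 : ∑ i, (m₂ i) ^ 2 ≤ E ^ 2) :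
    ∑ i, (x₂ i - x₁ i) ^ 2 ≤ (2 * D + 2 * E) ^ 2 := by
  set e := (WithLp.equiv 2 (Fin n → ℝ)).symm with he
  have hnsq : ∀ v : Fin n → ℝ, ‖e v‖ ^ 2 = ∑ i, (v i) ^ 2 := by
    intro v
    rw [EuclideanSpace.norm_eq, Real.sq_sqrt (by positivity)]
    exact Finset.sum_congr rfl fun i _ => by
      rw [WithLp.equiv_symm_apply, Real.norm_eq_abs, sq_abs]
  have norm_le : ∀ (u : Fin n → ℝ) (C : ℝ), 0 ≤ C → (∑ i, (u i) ^ 2 ≤ C ^ 2) → ‖e u‖ ≤ C := by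
    intro u C hC h
    nlinarith [hnsq u, norm_nonneg (e u)]
  have hsub : ∀ u v : Fin n → ℝ, e u - e v = e (u - v) := by
    intro u v; rw [WithLp.equiv_symm_apply, WithLp.toLp_sub]
  have n1 : ‖e x₁ - e m₁‖ ≤ D := by
    rw [hsub]; exact norm_le _ _ hD (by simpa using h1)
  have n2 : ‖e x₂ - e m₂‖ ≤ D := by
    rw [hsub]; exact norm_le _ _ hD (by simpa using h2)
  have n3 : ‖e m₁‖ ≤ E := norm_le _ _ hE h3
  have n4 : ‖e m₂‖ ≤ E := norm_le _ _ hE h4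
  have htri : ‖e x₂ - e x₁‖ ≤ 2 * D + 2 * E := by
    have hsplit : e x₂ - e x₁ = (e x₂ - e m₂) + (e m₂ - e m₁) + (e m₁ - e x₁) := by abel
    rw [hsplit]
    calc ‖(e x₂ - e m₂) + (e m₂ - e m₁) + (e m₁ - e x₁)‖
        ≤ ‖e x₂ - e m₂‖ + ‖e m₂ - e m₁‖ + ‖e m₁ - e x₁‖ :=
          (norm_add_le _ _).trans (by gcongr; exact norm_add_le _ _)
      _ ≤ D + (‖e m₂‖ + ‖e m₁‖) + D := by
          rw [norm_sub_rev (e m₁)]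
          gcongr <;> first | assumption | exact norm_sub_le _ _
      _ ≤ 2 * D + 2 * E := by linarith
  have hfin : ‖e x₂ - e x₁‖ ^ 2 ≤ (2 * D + 2 * E) ^ 2 :=
    pow_le_pow_left₀ (norm_nonneg _) htri 2
  rw [hsub, hnsq] at hfin
  simpa using hfin

/-- If one local function is replaced, the two constrained minimizers satisfy
`‖x⁽²⁾ − x⁽¹⁾‖² ≤ 4nκ(1 + 1/√κ + |b|/n)²`, where `κ = β/α`. -/
theorem minimizer_shift_bound (n : ℕ) (hn : 1 ≤ n) (α β b : ℝ)
    (hα : 0 < α) (hαβ : α ≤ β) (i₀ : Fin n)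
    (g₁ g₂ : Fin n → ℝ → ℝ)
    (hsame : ∀ i, i ≠ i₀ → g₁ i = g₂ i)
    (hdiff : ∀ i x, DifferentiableAt ℝ (g₁ i) x ∧ DifferentiableAt ℝ (g₂ i) x)
    (hconv : ∀ i, ConvexOn ℝ Set.univ (fun x => g₁ i x - α / 2 * x ^ 2) ∧
                  ConvexOn ℝ Set.univ (fun x => g₂ i x - α / 2 * x ^ 2))
    (hsmooth : ∀ i x y, |deriv (g₁ i) x - deriv (g₁ i) y| ≤ β * |x - y| ∧
                        |deriv (g₂ i) x - deriv (g₂ i) y| ≤ β * |x - y|)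
    (hloc : ∀ i, (∃ m ∈ Set.Icc (-1:ℝ) 1, (∀ y, g₁ i m ≤ g₁ i y) ∧ g₁ i m = 0) ∧
                 (∃ m ∈ Set.Icc (-1:ℝ) 1, (∀ y, g₂ i m ≤ g₂ i y) ∧ g₂ i m = 0))
    (x₁ x₂ : Fin n → ℝ)
    (hfeas₁ : ∑ i, x₁ i = b) (hfeas₂ : ∑ i, x₂ i = b)
    (hmin₁ : ∀ y : Fin n → ℝ, ∑ i, y i = b →
      ∑ i, g₁ i (x₁ i) ≤ ∑ i, g₁ i (y i))
    (hmin₂ : ∀ y : Fin n → ℝ, ∑ i, y i = b →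
      ∑ i, g₂ i (x₂ i) ≤ ∑ i, g₂ i (y i)) :
    ∑ i, (x₂ i - x₁ i) ^ 2 ≤
      4 * n * (β / α) * (1 + 1 / Real.sqrt (β / α) + |b| / n) ^ 2 := by
  have hβ : 0 < β := lt_of_lt_of_le hα hαβ
  have npos : (0:ℝ) < n := by exact_mod_cast hn
  choose m₁ hm₁mem hm₁min hm₁0 using fun i => (hloc i).1
  choose m₂ hm₂mem hm₂min hm₂0 using fun i => (hloc i).2
  -- generic bound for a single minimization problem
  have key : ∀ (g : Fin n → ℝ → ℝ) (x m : Fin n → ℝ),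
      (∀ i t, DifferentiableAt ℝ (g i) t) →
      (∀ i, ConvexOn ℝ Set.univ fun t => g i t - α / 2 * t ^ 2) →
      (∀ i s t, |deriv (g i) s - deriv (g i) t| ≤ β * |s - t|) →
      (∀ i, m i ∈ Set.Icc (-1:ℝ) 1) →
      (∀ i y, g i (m i) ≤ g i y) → (∀ i, g i (m i) = 0) →
      (∀ y : Fin n → ℝ, ∑ i, y i = b → ∑ i, g i (x i) ≤ ∑ i, g i (y i)) →
      ∑ i, (x i - m i) ^ 2 ≤ β / α * n * (1 + |b| / n) ^ 2 := by
    intro g x m hgd hgc hgs hmmem hmmin hm0 hxmin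
    have hlow : α / 2 * ∑ i, (x i - m i) ^ 2 ≤ ∑ i, g i (x i) := by
      rw [Finset.mul_sum]
      exact Finset.sum_le_sum fun i _ =>
        strong_lower (hgd i) (hgc i) (hmmin i) (hm0 i) (x i)
    have hyfeas : ∑ _i : Fin n, b / n = b := by
      rw [Finset.sum_const, Finset.card_univ, Fintype.card_fin, nsmul_eq_mul]
      field_simp
    have hmid := hxmin (fun _ => b / n) hyfeas
    have hup : ∑ i : Fin n, g i (b / n) ≤ β / 2 * (n * (1 + |b| / n) ^ 2) := by
      have h1 : ∀ i : Fin n, g i (b / n) ≤ β / 2 * (1 + |b| / n) ^ 2 := by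
        intro i
        have h2 := smooth_upper hβ (hgd i) (hgs i) (hmmin i) (hm0 i) (b / n)
        have h3 : (b / n - m i) ^ 2 ≤ (1 + |b| / n) ^ 2 := by
          obtain ⟨hm1, hm2⟩ := hmmem i
          have habs : |b / n| = |b| / n := by
            rw [abs_div, Nat.abs_cast]
          have hb1 : b / n ≤ |b| / n := habs ▸ le_abs_self (b / n)
          have hb2 : -(|b| / n) ≤ b / n := habs ▸ neg_abs_le (b / n)
          apply sq_le_sq'
          · nlinarith [abs_nonneg b]
          · nlinarith [abs_nonneg b]
        nlinarith [sq_nonneg (b / n - m i)]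
      calc ∑ i : Fin n, g i (b / n) ≤ ∑ _i : Fin n, β / 2 * (1 + |b| / n) ^ 2 :=
            Finset.sum_le_sum fun i _ => h1 i
        _ = β / 2 * (n * (1 + |b| / n) ^ 2) := by
            rw [Finset.sum_const, Finset.card_univ, Fintype.card_fin, nsmul_eq_mul]; ring
    have hchain : α / 2 * ∑ i, (x i - m i) ^ 2 ≤ β / 2 * (n * (1 + |b| / n) ^ 2) :=
      hlow.trans (hmid.trans hup)
    rw [show β / α * n * (1 + |b| / n) ^ 2 = β * (n * (1 + |b| / n) ^ 2) / α by ring,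
      le_div_iff₀ hα]
    nlinarith [hchain]
  have key₁ := key g₁ x₁ m₁ (fun i t => (hdiff i t).1) (fun i => (hconv i).1)
    (fun i s t => (hsmooth i s t).1) hm₁mem hm₁min hm₁0 hmin₁
  have key₂ := key g₂ x₂ m₂ (fun i t => (hdiff i t).2) (fun i => (hconv i).2)
    (fun i s t => (hsmooth i s t).2) hm₂mem hm₂min hm₂0 hmin₂
  set R := Real.sqrt (β / α) with hRdef
  have hκ1 : (1:ℝ) ≤ β / α := (one_le_div hα).mpr hαβ
  have hRsq : R ^ 2 = β / α := Real.sq_sqrt (by positivity)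
  have hR1 : 1 ≤ R := by nlinarith [Real.sqrt_nonneg (β / α)]
  have hR0 : 0 < R := lt_of_lt_of_le one_pos hR1
  set sn := Real.sqrt (n : ℝ) with hsndef
  have hsnsq : sn ^ 2 = (n : ℝ) := Real.sq_sqrt npos.le
  have hsn0 : 0 ≤ sn := Real.sqrt_nonneg _
  set D := sn * R * (1 + |b| / n) with hDdef
  have habsb : 0 ≤ |b| / n := by positivity
  have hD0 : 0 ≤ D := by positivity
  have hDsq : D ^ 2 = β / α * n * (1 + |b| / n) ^ 2 := by
    rw [hDdef, mul_pow, mul_pow, hsnsq, hRsq]; ring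
  have hmsq : ∀ m : Fin n → ℝ, (∀ i, m i ∈ Set.Icc (-1:ℝ) 1) → ∑ i, (m i) ^ 2 ≤ sn ^ 2 := by
    intro m hm
    rw [hsnsq]
    calc ∑ i, (m i) ^ 2 ≤ ∑ _i : Fin n, (1:ℝ) := by
          apply Finset.sum_le_sum
          intro i _
          obtain ⟨h1, h2⟩ := hm i
          nlinarith
      _ = (n : ℝ) := by simp
  have hmain := euclid_bound x₁ x₂ m₁ m₂ D sn hD0 hsn0
    (by rw [hDsq]; exact key₁) (by rw [hDsq]; exact key₂)
    (hmsq m₁ hm₁mem) (hmsq m₂ hm₂mem)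
  have hBeq : 2 * D + 2 * sn = 2 * sn * R * (1 + 1 / R + |b| / n) := by
    rw [hDdef]; field_simp; ring
  calc ∑ i, (x₂ i - x₁ i) ^ 2 ≤ (2 * D + 2 * sn) ^ 2 := hmain
    _ = (2 * sn * R * (1 + 1 / R + |b| / n)) ^ 2 := by rw [hBeq]
    _ = 4 * (sn ^ 2) * (R ^ 2) * (1 + 1 / R + |b| / n) ^ 2 := by ring
    _ = 4 * n * (β / α) * (1 + 1 / Real.sqrt (β / α) + |b| / n) ^ 2 := by
        rw [hsnsq, hRsq]
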